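/- The tempering-variable thermostat stationarity identity: for constants μ, b_U, κ_ξ, m_ξ, T > 0 (with μ = [λ'(ξ)]² treated as a positive constant), the density π(p_ξ, s_ξ) = exp(−[p_ξ²/(2m_ξ) + (κ_ξ/2)(s_ξ − b_U/(m_ξT))²]/T) satisfies ∂_{p_ξ}(μ s_ξ p_ξ π) − ∂_{s_ξ}((μ/κ_ξ)(p_ξ²/m_ξ − T) π) + μ b_U ∂²_{p_ξ} π = 0 for all (p_ξ, s_ξ) ∈ ℝ². -/

import Mathlib

/-- The tempering-variable thermostat stationarity identity: for positive
constants `μ = [λ'(ξ)]²`, `b_U`, `κ_ξ`, `m_ξ`, `T`, the density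
`π(p_ξ,s_ξ) = exp(−[p_ξ²/(2m_ξ) + (κ_ξ/2)(s_ξ − b_U/(m_ξT))²]/T)` satisfies
`∂_{p_ξ}(μ s_ξ p_ξ π) − ∂_{s_ξ}((μ/κ_ξ)(p_ξ²/m_ξ − T)π) + μ b_U ∂²_{p_ξ} π = 0`
for all `(p_ξ, s_ξ) ∈ ℝ²`. -/
theorem xi_thermostat_fpe_cancellation (μ bU κξ mξ T : ℝ)
    (hμ : 0 < μ) (hbU : 0 < bU) (hκξ : 0 < κξ) (hmξ : 0 < mξ) (hT : 0 < T)
    (π : ℝ → ℝ → ℝ)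
    (hπ : ∀ pξ sξ, π pξ sξ =
      Real.exp (-(pξ ^ 2 / (2 * mξ) + (κξ / 2) * (sξ - bU / (mξ * T)) ^ 2) / T)) :
    ∀ pξ sξ : ℝ,
      deriv (fun p' => μ * sξ * p' * π p' sξ) pξ
        - deriv (fun s' => (μ / κξ) * (pξ ^ 2 / mξ - T) * π pξ s') sξ
        + μ * bU * deriv (deriv (fun p' => π p' sξ)) pξ
      = 0 := by
  intro pξ sξ
  have hπfun : π = fun p s =>
      Real.exp (-(p ^ 2 / (2 * mξ) + (κξ / 2) * (s - bU / (mξ * T)) ^ 2) / T) := by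
    funext p s; exact hπ p s
  subst hπfun
  have hm : mξ ≠ 0 := hmξ.ne'
  have hT0 : T ≠ 0 := hT.ne'
  set c : ℝ := bU / (mξ * T) with hc
  set E : ℝ → ℝ → ℝ := fun p s =>
    Real.exp (-(p ^ 2 / (2 * mξ) + (κξ / 2) * (s - c) ^ 2) / T) with hE
  -- derivative in p of the exponential
  have hp : ∀ p s, HasDerivAt (fun p' => E p' s) (-p / (mξ * T) * E p s) p := by
    intro p s
    have h1 : HasDerivAt (fun p' : ℝ =>
        -(p' ^ 2 / (2 * mξ) + (κξ / 2) * (s - c) ^ 2) / T) (-p / (mξ * T)) p := by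
      have hsq : HasDerivAt (fun p' : ℝ => p' ^ 2) (2 * p) p := by
        simpa using (hasDerivAt_pow 2 p)
      have := ((hsq.div_const (2 * mξ)).add_const ((κξ / 2) * (s - c) ^ 2)).fun_neg.div_const T
      refine this.congr_deriv ?_
      field_simp
    simpa [E, mul_comm] using h1.exp
  -- derivative in s of the exponential
  have hs : ∀ p s, HasDerivAt (fun s' => E p s') (-(κξ * (s - c)) / T * E p s) s := by
    intro p s
    have h1 : HasDerivAt (fun s' : ℝ =>
        -(p ^ 2 / (2 * mξ) + (κξ / 2) * (s' - c) ^ 2) / T) (-(κξ * (s - c)) / T) s := by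
      have hsq : HasDerivAt (fun s' : ℝ => (s' - c) ^ 2) (2 * (s - c)) s := by
        simpa using ((hasDerivAt_id s).sub_const c).fun_pow 2
      have := (((hsq.const_mul (κξ / 2)).const_add (p ^ 2 / (2 * mξ))).fun_neg).div_const T
      refine this.congr_deriv ?_
      field_simp
    simpa [E, mul_comm] using h1.exp
  -- term 1
  have h1 : deriv (fun p' => μ * sξ * p' * E p' sξ) pξ
      = μ * sξ * E pξ sξ + μ * sξ * pξ * (-pξ / (mξ * T) * E pξ sξ) := by
    have := (((hasDerivAt_id pξ).const_mul (μ * sξ)).fun_mul (hp pξ sξ))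
    have h' := this.deriv
    simpa [mul_comm, mul_left_comm, mul_assoc] using h'
  -- term 2
  have h2 : deriv (fun s' => (μ / κξ) * (pξ ^ 2 / mξ - T) * E pξ s') sξ
      = (μ / κξ) * (pξ ^ 2 / mξ - T) * (-(κξ * (sξ - c)) / T * E pξ sξ) := by
    have := ((hs pξ sξ).const_mul ((μ / κξ) * (pξ ^ 2 / mξ - T))).deriv
    simpa [mul_comm, mul_left_comm, mul_assoc] using this
  -- term 3: second derivative in p
  have hderiv1 : (deriv fun p' => E p' sξ) = fun p => -p / (mξ * T) * E p sξ := by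
    funext p; exact (hp p sξ).deriv
  have h3 : deriv (deriv (fun p' => E p' sξ)) pξ
      = -1 / (mξ * T) * E pξ sξ + -pξ / (mξ * T) * (-pξ / (mξ * T) * E pξ sξ) := by
    rw [hderiv1]
    have hlin : HasDerivAt (fun p : ℝ => -p / (mξ * T)) (-1 / (mξ * T)) pξ := by
      simpa using ((hasDerivAt_id pξ).neg.div_const (mξ * T))
    have := (hlin.fun_mul (hp pξ sξ)).deriv
    simpa [mul_comm, mul_left_comm, mul_assoc] using this
  rw [h1, h2, h3, hc]
  have hκ0 : κξ ≠ 0 := hκξ.ne'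
  field_simp
  ring
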